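/- arXiv:1105.4668 — 5 statements merged into one kernel-verified Lean document; each statement's English description precedes it below -/
import Mathlib

section
/- Let $\rho$ be a density matrix on $\mathbb{C}^2\otimes\mathbb{C}^3$ that is separable, i.e., a finite convex combination $\rho = \sum_i p_i |\xi_i\rangle\langle\xi_i|$ of product pure states $|\xi_i\rangle = |u_i\rangle\otimes|v_i\rangle$. Then for all $2\times 2$ unitaries $U$ and $3\times 3$ unitaries $V$, with $A_i = U\sigma_iU^\dagger$ and $B_j = V\lambda_jV^\dagger$, one has $\langle 2I_2\otimes I_3 - I_2\otimes B_1 + 2I_2\otimes B_2 + 3A_3\otimes B_1\rangle_\rho \geq \big(\langle 3I_2\otimes B_1 + 2A_3\otimes I_3 - A_3\otimes B_1 + 2A_3\otimes B_2\rangle_\rho^2 + 9\langle A_1\otimes B_3 + A_2\otimes B_4\rangle_\rho^2\big)^{1/2}$. -/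
open Matrix Kronecker
open scoped ComplexOrder

noncomputable section

abbrev M2 : Type := Matrix (Fin 2) (Fin 2) ℂ
abbrev M3 : Type := Matrix (Fin 3) (Fin 3) ℂ
abbrev M6 : Type := Matrix (Fin 2 × Fin 3) (Fin 2 × Fin 3) ℂ

/-- Pauli matrices -/
def sig1 : M2 := Matrix.single 0 1 1 + Matrix.single 1 0 1
def sig2 : M2 := Complex.I • Matrix.single 0 1 1 - Complex.I • Matrix.single 1 0 1
def sig3 : M2 := Matrix.single 0 0 1 - Matrix.single 1 1 1

/-- Gell-Mann-type matrices on C^3 -/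
def lam1 : M3 := Matrix.single 0 0 1 - Matrix.single 1 1 1
def lam2 : M3 := Matrix.single 0 0 1 - Matrix.single 2 2 1
def lam3 : M3 := Matrix.single 0 1 1 + Matrix.single 1 0 1
def lam4 : M3 := Complex.I • Matrix.single 0 1 1 - Complex.I • Matrix.single 1 0 1

/-- partial transpose on the first (2-dimensional) factor -/
def PT {d : ℕ} (ρ : Matrix (Fin 2 × Fin d) (Fin 2 × Fin d) ℂ) :
    Matrix (Fin 2 × Fin d) (Fin 2 × Fin d) ℂ :=
  fun p q => ρ (q.1, p.2) (p.1, q.2)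

/-- expectation value of an observable M in the state ρ -/
def expval {n : Type} [Fintype n] (ρ M : Matrix n n ℂ) : ℝ := ((ρ * M).trace).re

/-- projector |ψ⟩⟨ψ| -/
def proj {n : Type} (ψ : n → ℂ) : Matrix n n ℂ := Matrix.vecMulVec ψ (star ψ)


/-- A_i = U σ_i U†, B_j = V λ_j V† -/
def OA (U : M2) (i : Fin 3) : M2 := U * (![sig1, sig2, sig3] i) * Uᴴ
def OB (V : M3) (j : Fin 4) : M3 := V * (![lam1, lam2, lam3, lam4] j) * Vᴴ

/-- the observable ⟨2 I⊗I - I⊗B₁ + 2 I⊗B₂ + 3 A₃⊗B₁⟩ -/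
def Obs0 (U : M2) (V : M3) : M6 :=
  (2:ℂ) • ((1:M2) ⊗ₖ (1:M3)) - (1:M2) ⊗ₖ OB V 0 + (2:ℂ) • ((1:M2) ⊗ₖ OB V 1)
    + (3:ℂ) • (OA U 2 ⊗ₖ OB V 0)

/-- the observable 3 I⊗B₁ + 2 A₃⊗I - A₃⊗B₁ + 2 A₃⊗B₂ -/
def Obs1 (U : M2) (V : M3) : M6 :=
  (3:ℂ) • ((1:M2) ⊗ₖ OB V 0) + (2:ℂ) • (OA U 2 ⊗ₖ (1:M3)) - OA U 2 ⊗ₖ OB V 0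
    + (2:ℂ) • (OA U 2 ⊗ₖ OB V 1)

/-- the observable A₁⊗B₃ + A₂⊗B₄ -/
def Obs2 (U : M2) (V : M3) : M6 := OA U 0 ⊗ₖ OB V 2 + OA U 1 ⊗ₖ OB V 3


-- ===== auxiliary lemmas =====

lemma trace_proj_self {n : Type} [Fintype n] (ψ : n → ℂ) : (proj ψ).trace = star ψ ⬝ᵥ ψ := by
  simp [proj, Matrix.trace, Matrix.diag, vecMulVec_apply, dotProduct, mul_comm]

lemma trace_sig1 (w : Fin 2 → ℂ) :
    (proj w * sig1).trace = (((2:ℝ) * ((starRingEnd ℂ) (w 0) * w 1).re : ℝ) : ℂ) := by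
  simp [proj, sig1, Matrix.trace, Matrix.diag, Matrix.mul_apply, vecMulVec_apply,
    Fin.sum_univ_two, Matrix.single]
  apply Complex.ext <;> simp [Complex.add_re, Complex.mul_re, Complex.mul_im] <;> ring

lemma trace_sig2 (w : Fin 2 → ℂ) :
    (proj w * sig2).trace = (((-2:ℝ) * ((starRingEnd ℂ) (w 0) * w 1).im : ℝ) : ℂ) := by
  simp [proj, sig2, Matrix.trace, Matrix.diag, Matrix.mul_apply, vecMulVec_apply,
    Fin.sum_univ_two, Matrix.single]
  apply Complex.ext <;> simp [Complex.add_re, Complex.mul_re, Complex.mul_im] <;> ring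

lemma trace_sig3 (w : Fin 2 → ℂ) :
    (proj w * sig3).trace = ((Complex.normSq (w 0) - Complex.normSq (w 1) : ℝ) : ℂ) := by
  simp [proj, sig3, Matrix.trace, Matrix.diag, Matrix.mul_apply, vecMulVec_apply,
    Fin.sum_univ_two, Matrix.single, Complex.normSq_apply]
  apply Complex.ext <;> simp [Complex.add_re, Complex.mul_re, Complex.mul_im] <;> ring

lemma trace_lam1 (r : Fin 3 → ℂ) :
    (proj r * lam1).trace = ((Complex.normSq (r 0) - Complex.normSq (r 1) : ℝ) : ℂ) := by
  simp [proj, lam1, Matrix.trace, Matrix.diag, Matrix.mul_apply, vecMulVec_apply,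
    Fin.sum_univ_three, Matrix.single, Complex.normSq_apply]
  apply Complex.ext <;> simp [Complex.add_re, Complex.mul_re, Complex.mul_im] <;> ring

lemma trace_lam2 (r : Fin 3 → ℂ) :
    (proj r * lam2).trace = ((Complex.normSq (r 0) - Complex.normSq (r 2) : ℝ) : ℂ) := by
  simp [proj, lam2, Matrix.trace, Matrix.diag, Matrix.mul_apply, vecMulVec_apply,
    Fin.sum_univ_three, Matrix.single, Complex.normSq_apply]
  apply Complex.ext <;> simp [Complex.add_re, Complex.mul_re, Complex.mul_im] <;> ring

lemma trace_lam3 (r : Fin 3 → ℂ) :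
    (proj r * lam3).trace = (((2:ℝ) * ((starRingEnd ℂ) (r 0) * r 1).re : ℝ) : ℂ) := by
  simp [proj, lam3, Matrix.trace, Matrix.diag, Matrix.mul_apply, vecMulVec_apply,
    Fin.sum_univ_three, Matrix.single]
  apply Complex.ext <;> simp [Complex.add_re, Complex.mul_re, Complex.mul_im] <;> ring

lemma trace_lam4 (r : Fin 3 → ℂ) :
    (proj r * lam4).trace = (((-2:ℝ) * ((starRingEnd ℂ) (r 0) * r 1).im : ℝ) : ℂ) := by
  simp [proj, lam4, Matrix.trace, Matrix.diag, Matrix.mul_apply, vecMulVec_apply,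
    Fin.sum_univ_three, Matrix.single]
  apply Complex.ext <;> simp [Complex.add_re, Complex.mul_re, Complex.mul_im] <;> ring

lemma conj_proj {n : Type} [Fintype n] [DecidableEq n] (W : Matrix n n ℂ) (ψ : n → ℂ) :
    Wᴴ * proj ψ * W = proj (Wᴴ *ᵥ ψ) := by
  rw [proj, proj, vecMulVec_eq (Fin 1), vecMulVec_eq (Fin 1), star_mulVec,
    conjTranspose_conjTranspose, replicateRow_vecMul, replicateCol_mulVec]
  simp [Matrix.mul_assoc]

lemma traceConj {n : Type} [Fintype n] [DecidableEq n] (W M : Matrix n n ℂ) (ψ : n → ℂ) :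
    (proj ψ * (W * M * Wᴴ)).trace = (proj (Wᴴ *ᵥ ψ) * M).trace := by
  rw [← conj_proj, ← Matrix.mul_assoc, ← Matrix.mul_assoc,
    Matrix.trace_mul_comm (proj ψ * W * M) Wᴴ]
  simp [Matrix.mul_assoc]

lemma trace_prod {m n : Type} [Fintype m] [Fintype n] (P : Matrix m m ℂ) (Q : Matrix n n ℂ)
    (X : Matrix m m ℂ) (Y : Matrix n n ℂ) :
    ((P ⊗ₖ Q) * (X ⊗ₖ Y)).trace = (P * X).trace * (Q * Y).trace := by
  rw [← Matrix.mul_kronecker_mul, Matrix.trace_kronecker]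

lemma unit_conj {n : Type} [Fintype n] [DecidableEq n] (W : Matrix n n ℂ)
    (hW : W ∈ Matrix.unitaryGroup n ℂ) (ψ : n → ℂ) (hψ : star ψ ⬝ᵥ ψ = 1) :
    star (Wᴴ *ᵥ ψ) ⬝ᵥ (Wᴴ *ᵥ ψ) = 1 := by
  rw [star_mulVec, conjTranspose_conjTranspose, dotProduct_mulVec, vecMul_vecMul,
    ← Matrix.star_eq_conjTranspose, (Matrix.mem_unitaryGroup_iff).mp hW, vecMul_one, hψ]

lemma norm2_two (w : Fin 2 → ℂ) (h : star w ⬝ᵥ w = 1) :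
    Complex.normSq (w 0) + Complex.normSq (w 1) = 1 := by
  have h2 : ((Complex.normSq (w 0) + Complex.normSq (w 1) : ℝ) : ℂ) = 1 := by
    rw [← h]
    simp [dotProduct, Fin.sum_univ_two, Complex.normSq_eq_conj_mul_self]
  exact_mod_cast h2

lemma norm2_three (w : Fin 3 → ℂ) (h : star w ⬝ᵥ w = 1) :
    Complex.normSq (w 0) + Complex.normSq (w 1) + Complex.normSq (w 2) = 1 := by
  have h2 : ((Complex.normSq (w 0) + Complex.normSq (w 1) + Complex.normSq (w 2) : ℝ) : ℂ) = 1 := by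
    rw [← h]
    simp [dotProduct, Fin.sum_univ_three, Complex.normSq_eq_conj_mul_self]
  exact_mod_cast h2

lemma expval_Obs0 (U : M2) (V : M3) (u : Fin 2 → ℂ) (v : Fin 3 → ℂ)
    (hu : star u ⬝ᵥ u = 1) (hv : star v ⬝ᵥ v = 1) :
    expval (proj u ⊗ₖ proj v) (Obs0 U V) =
      2 - (Complex.normSq ((Vᴴ *ᵥ v) 0) - Complex.normSq ((Vᴴ *ᵥ v) 1))
        + 2 * (Complex.normSq ((Vᴴ *ᵥ v) 0) - Complex.normSq ((Vᴴ *ᵥ v) 2))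
        + 3 * (Complex.normSq ((Uᴴ *ᵥ u) 0) - Complex.normSq ((Uᴴ *ᵥ u) 1))
            * (Complex.normSq ((Vᴴ *ᵥ v) 0) - Complex.normSq ((Vᴴ *ᵥ v) 1)) := by
  have hOA : OA U 2 = U * sig3 * Uᴴ := rfl
  have hOB0 : OB V 0 = V * lam1 * Vᴴ := rfl
  have hOB1 : OB V 1 = V * lam2 * Vᴴ := rfl
  rw [expval, Obs0, hOA, hOB0, hOB1]
  rw [Matrix.mul_add, Matrix.mul_add, Matrix.mul_sub, Matrix.mul_smul, Matrix.mul_smul,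
    Matrix.mul_smul, Matrix.trace_add, Matrix.trace_add, Matrix.trace_sub, Matrix.trace_smul,
    Matrix.trace_smul, Matrix.trace_smul]
  rw [trace_prod, trace_prod, trace_prod, trace_prod, Matrix.mul_one, Matrix.mul_one,
    trace_proj_self, trace_proj_self, hu, hv, traceConj, traceConj, traceConj,
    trace_lam1, trace_lam2, trace_sig3]
  simp [smul_eq_mul]
  ring

lemma expval_Obs1 (U : M2) (V : M3) (u : Fin 2 → ℂ) (v : Fin 3 → ℂ)
    (hu : star u ⬝ᵥ u = 1) (hv : star v ⬝ᵥ v = 1) :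
    expval (proj u ⊗ₖ proj v) (Obs1 U V) =
      3 * (Complex.normSq ((Vᴴ *ᵥ v) 0) - Complex.normSq ((Vᴴ *ᵥ v) 1))
        + 2 * (Complex.normSq ((Uᴴ *ᵥ u) 0) - Complex.normSq ((Uᴴ *ᵥ u) 1))
        - (Complex.normSq ((Uᴴ *ᵥ u) 0) - Complex.normSq ((Uᴴ *ᵥ u) 1))
            * (Complex.normSq ((Vᴴ *ᵥ v) 0) - Complex.normSq ((Vᴴ *ᵥ v) 1))
        + 2 * ((Complex.normSq ((Uᴴ *ᵥ u) 0) - Complex.normSq ((Uᴴ *ᵥ u) 1))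
            * (Complex.normSq ((Vᴴ *ᵥ v) 0) - Complex.normSq ((Vᴴ *ᵥ v) 2))) := by
  have hOA : OA U 2 = U * sig3 * Uᴴ := rfl
  have hOB0 : OB V 0 = V * lam1 * Vᴴ := rfl
  have hOB1 : OB V 1 = V * lam2 * Vᴴ := rfl
  rw [expval, Obs1, hOA, hOB0, hOB1]
  rw [Matrix.mul_add, Matrix.mul_sub, Matrix.mul_add, Matrix.mul_smul, Matrix.mul_smul,
    Matrix.mul_smul, Matrix.trace_add, Matrix.trace_sub, Matrix.trace_add, Matrix.trace_smul,
    Matrix.trace_smul, Matrix.trace_smul]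
  rw [trace_prod, trace_prod, trace_prod, trace_prod, Matrix.mul_one, Matrix.mul_one,
    trace_proj_self, trace_proj_self, hu, hv, traceConj, traceConj, traceConj,
    trace_lam1, trace_lam2, trace_sig3]
  simp [smul_eq_mul]

lemma expval_Obs2 (U : M2) (V : M3) (u : Fin 2 → ℂ) (v : Fin 3 → ℂ) :
    expval (proj u ⊗ₖ proj v) (Obs2 U V) =
      4 * (((starRingEnd ℂ) ((Uᴴ *ᵥ u) 0) * (Uᴴ *ᵥ u) 1).re
              * ((starRingEnd ℂ) ((Vᴴ *ᵥ v) 0) * (Vᴴ *ᵥ v) 1).re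
          + ((starRingEnd ℂ) ((Uᴴ *ᵥ u) 0) * (Uᴴ *ᵥ u) 1).im
              * ((starRingEnd ℂ) ((Vᴴ *ᵥ v) 0) * (Vᴴ *ᵥ v) 1).im) := by
  have hOA0 : OA U 0 = U * sig1 * Uᴴ := rfl
  have hOA1 : OA U 1 = U * sig2 * Uᴴ := rfl
  have hOB2 : OB V 2 = V * lam3 * Vᴴ := rfl
  have hOB3 : OB V 3 = V * lam4 * Vᴴ := rfl
  rw [expval, Obs2, hOA0, hOA1, hOB2, hOB3]
  rw [Matrix.mul_add, Matrix.trace_add, trace_prod, trace_prod, traceConj, traceConj,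
    traceConj, traceConj, trace_sig1, trace_sig2, trace_lam3, trace_lam4]
  simp
  ring

lemma key_ineq (X Y x y z cr ci dr di : ℝ) (hX : 0 ≤ X) (hY : 0 ≤ Y) (hx : 0 ≤ x) (hy : 0 ≤ y)
    (hz : 0 ≤ z) (hXY : X + Y = 1) (hxyz : x + y + z = 1)
    (hc : cr^2 + ci^2 = X*Y) (hd : dr^2 + di^2 = x*y) :
    Real.sqrt ((3*(x-y) + 2*(X-Y) - (X-Y)*(x-y) + 2*((X-Y)*(x-z)))^2
      + 9*(4*(cr*dr+ci*di))^2)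
      ≤ 2 - (x-y) + 2*(x-z) + 3*((X-Y)*(x-y)) := by
  have hY' : Y = 1 - X := by linarith
  have hz' : z = 1 - x - y := by linarith
  subst hY' hz'
  have h0 : 0 ≤ 2 - (x-y) + 2*(x-(1-x-y)) + 3*((X-(1-X))*(x-y)) := by
    nlinarith [mul_nonneg hX hx, mul_nonneg hY hy]
  have hprod : (cr^2+ci^2)*(dr^2+di^2) = X*(1-X)*(x*y) := by rw [hc, hd]
  rw [show (2 - (x-y) + 2*(x-(1-x-y)) + 3*((X-(1-X))*(x-y)))
      = Real.sqrt ((2 - (x-y) + 2*(x-(1-x-y)) + 3*((X-(1-X))*(x-y)))^2) from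
      (Real.sqrt_sq h0).symm]
  apply Real.sqrt_le_sqrt
  nlinarith [sq_nonneg (cr*di - ci*dr), hprod]

lemma expval_sum_smul {m : Type} [Fintype m] {k : ℕ} (p : Fin k → ℝ)
    (σ : Fin k → Matrix m m ℂ) (M : Matrix m m ℂ) :
    expval (∑ i, ((p i : ℝ) : ℂ) • σ i) M = ∑ i, p i * expval (σ i) M := by
  rw [expval, Matrix.sum_mul]
  have : ∀ i, ((p i : ℝ) : ℂ) • σ i * M = ((p i : ℝ) : ℂ) • (σ i * M) := fun i =>
    smul_mul_assoc _ _ _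
  simp only [this, Matrix.trace_sum, Matrix.trace_smul, Complex.re_sum]
  refine Finset.sum_congr rfl fun i _ => ?_
  rw [smul_eq_mul, Complex.re_ofReal_mul, expval]

lemma abs_add_mul_I (a b : ℝ) :
    ‖(a : ℂ) + (b : ℂ) * Complex.I‖ = Real.sqrt (a^2 + b^2) := by
  rw [Complex.norm_def, Complex.normSq_add_mul_I]

theorem stmt_10 (ρ : M6) (n : ℕ) (p : Fin n → ℝ) (u : Fin n → (Fin 2 → ℂ))
    (v : Fin n → (Fin 3 → ℂ))
    (hp0 : ∀ i, 0 ≤ p i) (hp1 : ∑ i, p i = 1)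
    (hu : ∀ i, star (u i) ⬝ᵥ u i = 1) (hv : ∀ i, star (v i) ⬝ᵥ v i = 1)
    (hρ : ρ = ∑ i, ((p i : ℝ) : ℂ) • (proj (u i) ⊗ₖ proj (v i)))
    (U : M2) (hU : U ∈ Matrix.unitaryGroup (Fin 2) ℂ)
    (V : M3) (hV : V ∈ Matrix.unitaryGroup (Fin 3) ℂ) :
    Real.sqrt ((expval ρ (Obs1 U V))^2 + 9 * (expval ρ (Obs2 U V))^2)
      ≤ expval ρ (Obs0 U V) := by
  classical
  -- rotated vectors
  set w : Fin n → (Fin 2 → ℂ) := fun i => Uᴴ *ᵥ u i with hw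
  set r : Fin n → (Fin 3 → ℂ) := fun i => Vᴴ *ᵥ v i with hr
  -- real parameters per state
  set X : Fin n → ℝ := fun i => Complex.normSq (w i 0) with hX
  set Y : Fin n → ℝ := fun i => Complex.normSq (w i 1) with hY
  set x : Fin n → ℝ := fun i => Complex.normSq (r i 0) with hx
  set y : Fin n → ℝ := fun i => Complex.normSq (r i 1) with hy
  set z : Fin n → ℝ := fun i => Complex.normSq (r i 2) with hz
  set c : Fin n → ℂ := fun i => (starRingEnd ℂ) (w i 0) * w i 1 with hc
  set d : Fin n → ℂ := fun i => (starRingEnd ℂ) (r i 0) * r i 1 with hd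
  -- per-state expectation values
  set e0 : Fin n → ℝ := fun i => 2 - (x i - y i) + 2*(x i - z i) + 3*((X i - Y i)*(x i - y i))
    with he0
  set e1 : Fin n → ℝ := fun i =>
    3*(x i - y i) + 2*(X i - Y i) - (X i - Y i)*(x i - y i) + 2*((X i - Y i)*(x i - z i))
    with he1
  set e2 : Fin n → ℝ := fun i => 4*((c i).re * (d i).re + (c i).im * (d i).im) with he2
  have hE0 : expval ρ (Obs0 U V) = ∑ i, p i * e0 i := by
    rw [hρ, expval_sum_smul]
    refine Finset.sum_congr rfl fun i _ => ?_
    rw [expval_Obs0 U V (u i) (v i) (hu i) (hv i)]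
    simp only [he0, hX, hY, hx, hy, hz, hw, hr]
    ring
  have hE1 : expval ρ (Obs1 U V) = ∑ i, p i * e1 i := by
    rw [hρ, expval_sum_smul]
    refine Finset.sum_congr rfl fun i _ => ?_
    rw [expval_Obs1 U V (u i) (v i) (hu i) (hv i)]
  have hE2 : expval ρ (Obs2 U V) = ∑ i, p i * e2 i := by
    rw [hρ, expval_sum_smul]
    refine Finset.sum_congr rfl fun i _ => ?_
    rw [expval_Obs2 U V (u i) (v i)]
  -- per-state inequality
  have hkey : ∀ i, Real.sqrt ((e1 i)^2 + 9 * (e2 i)^2) ≤ e0 i := by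
    intro i
    have hXY : X i + Y i = 1 := norm2_two (w i) (unit_conj U hU (u i) (hu i))
    have hxyz : x i + y i + z i = 1 := norm2_three (r i) (unit_conj V hV (v i) (hv i))
    have hcs : (c i).re^2 + (c i).im^2 = X i * Y i := by
      have h1 : (c i).re^2 + (c i).im^2 = Complex.normSq (c i) := by
        rw [Complex.normSq_apply]; ring
      rw [h1, hc, hX, hY]
      simp [Complex.normSq_mul, Complex.normSq_conj]
    have hds : (d i).re^2 + (d i).im^2 = x i * y i := by
      have h1 : (d i).re^2 + (d i).im^2 = Complex.normSq (d i) := by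
        rw [Complex.normSq_apply]; ring
      rw [h1, hd, hx, hy]
      simp [Complex.normSq_mul, Complex.normSq_conj]
    have := key_ineq (X i) (Y i) (x i) (y i) (z i) (c i).re (c i).im (d i).re (d i).im
      (Complex.normSq_nonneg _) (Complex.normSq_nonneg _) (Complex.normSq_nonneg _)
      (Complex.normSq_nonneg _) (Complex.normSq_nonneg _) hXY hxyz hcs hds
    calc Real.sqrt ((e1 i)^2 + 9 * (e2 i)^2)
        = Real.sqrt ((3*(x i - y i) + 2*(X i - Y i) - (X i - Y i)*(x i - y i)
            + 2*((X i - Y i)*(x i - z i)))^2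
            + 9*(4*((c i).re * (d i).re + (c i).im * (d i).im))^2) := by rw [he1, he2]
      _ ≤ _ := this
  have he0nn : ∀ i, 0 ≤ e0 i := fun i =>
    le_trans (Real.sqrt_nonneg _) (hkey i)
  -- convexity via complex absolute value
  set F : Fin n → ℂ := fun i => ((e1 i : ℝ) : ℂ) + ((3 * e2 i : ℝ) : ℂ) * Complex.I with hF
  have habsF : ∀ i, ‖F i‖ = Real.sqrt ((e1 i)^2 + 9 * (e2 i)^2) := by
    intro i
    rw [hF]
    rw [abs_add_mul_I]
    congr 1
    ring
  have hsum : ((expval ρ (Obs1 U V) : ℝ) : ℂ)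
      + ((3 * expval ρ (Obs2 U V) : ℝ) : ℂ) * Complex.I = ∑ i, ((p i : ℝ) : ℂ) * F i := by
    rw [hE1, hE2, hF]
    apply Complex.ext
    · simp [Complex.re_sum, Complex.add_re, Complex.mul_re, Finset.mul_sum]
    · simp [Complex.im_sum, Complex.add_im, Complex.mul_im, Finset.mul_sum]
      exact Finset.sum_congr rfl fun i _ => by ring
  calc Real.sqrt ((expval ρ (Obs1 U V))^2 + 9 * (expval ρ (Obs2 U V))^2)
      = ‖((expval ρ (Obs1 U V) : ℝ) : ℂ)
          + ((3 * expval ρ (Obs2 U V) : ℝ) : ℂ) * Complex.I‖ := by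
        rw [abs_add_mul_I]
        congr 1
        ring
    _ = ‖∑ i, ((p i : ℝ) : ℂ) * F i‖ := by rw [hsum]
    _ ≤ ∑ i, ‖((p i : ℝ) : ℂ) * F i‖ := norm_sum_le _ _
    _ = ∑ i, p i * ‖F i‖ := by
        refine Finset.sum_congr rfl fun i _ => ?_
        rw [norm_mul, Complex.norm_real, Real.norm_eq_abs, abs_of_nonneg (hp0 i)]
    _ ≤ ∑ i, p i * e0 i := by
        refine Finset.sum_le_sum fun i _ => ?_
        rw [habsF]
        exact mul_le_mul_of_nonneg_left (hkey i) (hp0 i)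
    _ = expval ρ (Obs0 U V) := hE0.symm
end
end

section
/- Any two-qubit separable density matrix $\rho = \sum_i p_i |u_i\rangle\langle u_i|\otimes|v_i\rangle\langle v_i|$ satisfies $\langle I_2\otimes I_2 + A_3\otimes B_3\rangle_\rho \geq \big(\langle I_2\otimes B_3 + A_3\otimes I_2\rangle_\rho^2 + \langle A_1\otimes B_1 + A_2\otimes B_2\rangle_\rho^2\big)^{1/2}$ for all observables $A_i = U\sigma_i U^\dagger$, $B_j = V\sigma_j V^\dagger$ with $U,V$ arbitrary $2\times 2$ unitaries. -/
open Matrix Kronecker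
open scoped ComplexOrder

noncomputable section

abbrev M4 : Type := Matrix (Fin 2 × Fin 2) (Fin 2 × Fin 2) ℂ

def QA (U : M2) (i : Fin 3) : M2 := U * (![sig1, sig2, sig3] i) * Uᴴ

/-- I⊗I + A₃⊗B₃ -/
def Q0 (U V : M2) : M4 := (1:M2) ⊗ₖ (1:M2) + QA U 2 ⊗ₖ QA V 2
/-- I⊗B₃ + A₃⊗I -/
def Q1 (U V : M2) : M4 := (1:M2) ⊗ₖ QA V 2 + QA U 2 ⊗ₖ (1:M2)
/-- A₁⊗B₁ + A₂⊗B₂ -/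
def Q2 (U V : M2) : M4 := QA U 0 ⊗ₖ QA V 0 + QA U 1 ⊗ₖ QA V 1

/- ## Auxiliary lemmas -/

lemma key_real (a1 a2 a3 b1 b2 b3 : ℝ) (ha : a1^2+a2^2+a3^2 ≤ 1) (hb : b1^2+b2^2+b3^2 ≤ 1) :
    Real.sqrt ((a3+b3)^2 + (a1*b1+a2*b2)^2) ≤ 1 + a3*b3 := by
  have h3a : a3^2 ≤ 1 := by nlinarith [sq_nonneg a1, sq_nonneg a2]
  have h3b : b3^2 ≤ 1 := by nlinarith [sq_nonneg b1, sq_nonneg b2]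
  have hpos : 0 ≤ 1 + a3*b3 := by nlinarith [sq_nonneg (a3+b3), sq_nonneg (a3-b3)]
  rw [show (1:ℝ) + a3*b3 = Real.sqrt ((1+a3*b3)^2) by rw [Real.sqrt_sq hpos]]
  apply Real.sqrt_le_sqrt
  nlinarith [sq_nonneg (a1*b2-a2*b1),
    mul_nonneg (by nlinarith [sq_nonneg a3] : (0:ℝ) ≤ 1-a3^2-a1^2-a2^2)
      (by nlinarith [sq_nonneg b3] : (0:ℝ) ≤ 1-b3^2-b1^2-b2^2),
    sq_nonneg (a1*b1+a2*b2),
    mul_nonneg (mul_nonneg (by nlinarith : (0:ℝ)≤1-a3^2) (by nlinarith : (0:ℝ)≤1-b3^2))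
      (sq_nonneg 1)]

lemma traceconj (u : Fin 2 → ℂ) (U M : M2) :
    ((proj u * (U * M * Uᴴ)).trace) = (proj (Uᴴ *ᵥ u) * M).trace := by
  simp only [proj, Matrix.trace, Matrix.diag, Fin.sum_univ_two, Matrix.mul_apply, Matrix.vecMulVec_apply]
  simp [proj, Matrix.trace, Matrix.mul_apply, Matrix.vecMulVec_apply, Matrix.mulVec,
    dotProduct, Fin.sum_univ_two, Matrix.conjTranspose_apply, Matrix.diag]
  ring

lemma normw (u : Fin 2 → ℂ) (hu : star u ⬝ᵥ u = 1) (U : M2)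
    (hU : U ∈ Matrix.unitaryGroup (Fin 2) ℂ) :
    star (Uᴴ *ᵥ u) ⬝ᵥ (Uᴴ *ᵥ u) = 1 := by
  have h : U * Uᴴ = 1 := (Matrix.mem_unitaryGroup_iff.mp hU)
  calc star (Uᴴ *ᵥ u) ⬝ᵥ (Uᴴ *ᵥ u) = (star u ᵥ* U) ⬝ᵥ (Uᴴ *ᵥ u) := by
        rw [Matrix.star_mulVec, Matrix.conjTranspose_conjTranspose]
    _ = star u ⬝ᵥ ((U * Uᴴ) *ᵥ u) := by
        simp [Matrix.vecMul, Matrix.mulVec, dotProduct, Matrix.mul_apply,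
          Fin.sum_univ_two]
        ring
    _ = 1 := by rw [h, Matrix.one_mulVec, hu]

lemma tr1 (w : Fin 2 → ℂ) : (proj w * sig1).trace =
    ((2*((w 0).re*(w 1).re + (w 0).im*(w 1).im) : ℝ) : ℂ) := by
  simp [proj, sig1, Matrix.trace, Matrix.mul_apply, Matrix.vecMulVec_apply, Matrix.diag,
    Fin.sum_univ_two, Matrix.single, Complex.ext_iff, Complex.ofReal_pow]
  constructor <;> ring

lemma tr2 (w : Fin 2 → ℂ) : (proj w * sig2).trace =
    ((2*((w 1).re*(w 0).im - (w 1).im*(w 0).re) : ℝ) : ℂ) := by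
  simp [proj, sig2, Matrix.trace, Matrix.mul_apply, Matrix.vecMulVec_apply, Matrix.diag,
    Fin.sum_univ_two, Matrix.single, Complex.ext_iff, Complex.ofReal_pow]
  constructor <;> ring

lemma tr3 (w : Fin 2 → ℂ) : (proj w * sig3).trace =
    (((w 0).re*(w 0).re+(w 0).im*(w 0).im-(w 1).re*(w 1).re-(w 1).im*(w 1).im : ℝ) : ℂ) := by
  simp [proj, sig3, Matrix.trace, Matrix.mul_apply, Matrix.vecMulVec_apply, Matrix.diag,
    Fin.sum_univ_two, Matrix.single, Complex.ext_iff, Complex.ofReal_pow]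
  constructor <;> ring

lemma tr0 (w : Fin 2 → ℂ) : (proj w * 1).trace =
    (((w 0).re*(w 0).re+(w 0).im*(w 0).im+(w 1).re*(w 1).re+(w 1).im*(w 1).im : ℝ) : ℂ) := by
  simp [proj, Matrix.trace, Matrix.mul_apply, Matrix.vecMulVec_apply, Matrix.diag,
    Fin.sum_univ_two, Matrix.one_apply, Complex.ext_iff, Complex.ofReal_pow]
  constructor <;> ring

lemma normre (w : Fin 2 → ℂ) (hw : star w ⬝ᵥ w = 1) :
    (w 0).re*(w 0).re+(w 0).im*(w 0).im+(w 1).re*(w 1).re+(w 1).im*(w 1).im = 1 := by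
  have := congrArg Complex.re hw
  simp [dotProduct, Fin.sum_univ_two, Complex.ext_iff] at this
  nlinarith [this]

lemma trkron (P Q M N : M2) : ((P ⊗ₖ Q) * (M ⊗ₖ N)).trace = (P*M).trace * (Q*N).trace := by
  rw [← Matrix.mul_kronecker_mul, Matrix.trace_kronecker]

lemma QA0 (U : M2) : QA U 0 = U * sig1 * Uᴴ := rfl
lemma QA1 (U : M2) : QA U 1 = U * sig2 * Uᴴ := rfl
lemma QA2 (U : M2) : QA U 2 = U * sig3 * Uᴴ := rfl

lemma expval_add {n : Type} [Fintype n] (ρ M N : Matrix n n ℂ) :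
    expval ρ (M + N) = expval ρ M + expval ρ N := by
  simp [expval, Matrix.mul_add]

/-- The pure product state case. -/
lemma pure_case (u v : Fin 2 → ℂ) (hu : star u ⬝ᵥ u = 1) (hv : star v ⬝ᵥ v = 1)
    (U : M2) (hU : U ∈ Matrix.unitaryGroup (Fin 2) ℂ)
    (V : M2) (hV : V ∈ Matrix.unitaryGroup (Fin 2) ℂ) :
    Real.sqrt ((expval (proj u ⊗ₖ proj v) (Q1 U V))^2 + (expval (proj u ⊗ₖ proj v) (Q2 U V))^2)
      ≤ expval (proj u ⊗ₖ proj v) (Q0 U V) := by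
  set w := Uᴴ *ᵥ u with hw
  set t := Vᴴ *ᵥ v with ht
  have hnw := normre w (normw u hu U hU)
  have hnt := normre t (normw v hv V hV)
  set a1 : ℝ := 2*((w 0).re*(w 1).re + (w 0).im*(w 1).im) with ha1
  set a2 : ℝ := 2*((w 1).re*(w 0).im - (w 1).im*(w 0).re) with ha2
  set a3 : ℝ := (w 0).re*(w 0).re+(w 0).im*(w 0).im-(w 1).re*(w 1).re-(w 1).im*(w 1).im with ha3
  set b1 : ℝ := 2*((t 0).re*(t 1).re + (t 0).im*(t 1).im) with hb1
  set b2 : ℝ := 2*((t 1).re*(t 0).im - (t 1).im*(t 0).re) with hb2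
  set b3 : ℝ := (t 0).re*(t 0).re+(t 0).im*(t 0).im-(t 1).re*(t 1).re-(t 1).im*(t 1).im with hb3
  have hTu1 : (proj u * QA U 0).trace = (a1 : ℂ) := by rw [QA0, traceconj, ← hw, tr1]
  have hTu2 : (proj u * QA U 1).trace = (a2 : ℂ) := by rw [QA1, traceconj, ← hw, tr2]
  have hTu3 : (proj u * QA U 2).trace = (a3 : ℂ) := by rw [QA2, traceconj, ← hw, tr3]
  have hTv1 : (proj v * QA V 0).trace = (b1 : ℂ) := by rw [QA0, traceconj, ← ht, tr1]
  have hTv2 : (proj v * QA V 1).trace = (b2 : ℂ) := by rw [QA1, traceconj, ← ht, tr2]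
  have hTv3 : (proj v * QA V 2).trace = (b3 : ℂ) := by rw [QA2, traceconj, ← ht, tr3]
  have hTu0 : (proj u * 1).trace = 1 := by
    rw [tr0, normre u hu]; norm_num
  have hTv0 : (proj v * 1).trace = 1 := by
    rw [tr0, normre v hv]; norm_num
  have hE0 : expval (proj u ⊗ₖ proj v) (Q0 U V) = 1 + a3*b3 := by
    rw [Q0, expval_add]
    unfold expval
    rw [trkron, trkron, hTu0, hTv0, hTu3, hTv3]
    simp [← Complex.ofReal_mul]
  have hE1 : expval (proj u ⊗ₖ proj v) (Q1 U V) = b3 + a3 := by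
    rw [Q1, expval_add]
    unfold expval
    rw [trkron, trkron, hTu0, hTv0, hTu3, hTv3]
    simp [← Complex.ofReal_mul]
  have hE2 : expval (proj u ⊗ₖ proj v) (Q2 U V) = a1*b1 + a2*b2 := by
    rw [Q2, expval_add]
    unfold expval
    rw [trkron, trkron, hTu1, hTv1, hTu2, hTv2]
    simp [← Complex.ofReal_mul]
  rw [hE0, hE1, hE2]
  have haa : a1^2+a2^2+a3^2 ≤ 1 := by
    have : a1^2+a2^2+a3^2 = ((w 0).re*(w 0).re+(w 0).im*(w 0).im+(w 1).re*(w 1).re+(w 1).im*(w 1).im)^2 := by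
      rw [ha1, ha2, ha3]; ring
    rw [this, hnw]; norm_num
  have hbb : b1^2+b2^2+b3^2 ≤ 1 := by
    have : b1^2+b2^2+b3^2 = ((t 0).re*(t 0).re+(t 0).im*(t 0).im+(t 1).re*(t 1).re+(t 1).im*(t 1).im)^2 := by
      rw [hb1, hb2, hb3]; ring
    rw [this, hnt]; norm_num
  have := key_real a1 a2 a3 b1 b2 b3 haa hbb
  calc Real.sqrt ((b3+a3)^2 + (a1*b1+a2*b2)^2)
      = Real.sqrt ((a3+b3)^2 + (a1*b1+a2*b2)^2) := by congr 1; ring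
    _ ≤ 1 + a3*b3 := this

lemma expval_sum {n : Type} [Fintype n] (m : ℕ) (c : Fin m → ℝ)
    (P : Fin m → Matrix n n ℂ) (M : Matrix n n ℂ) :
    expval (∑ i, ((c i : ℝ) : ℂ) • P i) M = ∑ i, c i * expval (P i) M := by
  unfold expval
  rw [Finset.sum_mul]
  simp_rw [Matrix.smul_mul, Matrix.trace_sum, Matrix.trace_smul, Complex.re_sum]
  congr 1; ext i
  simp [Complex.smul_re]

theorem stmt_11 (ρ : M4) (n : ℕ) (p : Fin n → ℝ)
    (u v : Fin n → (Fin 2 → ℂ))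
    (hp0 : ∀ i, 0 ≤ p i) (hp1 : ∑ i, p i = 1)
    (hu : ∀ i, star (u i) ⬝ᵥ u i = 1) (hv : ∀ i, star (v i) ⬝ᵥ v i = 1)
    (hρ : ρ = ∑ i, ((p i : ℝ) : ℂ) • (proj (u i) ⊗ₖ proj (v i)))
    (U : M2) (hU : U ∈ Matrix.unitaryGroup (Fin 2) ℂ)
    (V : M2) (hV : V ∈ Matrix.unitaryGroup (Fin 2) ℂ) :
    Real.sqrt ((expval ρ (Q1 U V))^2 + (expval ρ (Q2 U V))^2)
      ≤ expval ρ (Q0 U V) := by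
  subst hρ
  rw [expval_sum, expval_sum, expval_sum]
  set x : Fin n → ℝ := fun i => expval (proj (u i) ⊗ₖ proj (v i)) (Q1 U V) with hx
  set y : Fin n → ℝ := fun i => expval (proj (u i) ⊗ₖ proj (v i)) (Q2 U V) with hy
  set e : Fin n → ℝ := fun i => expval (proj (u i) ⊗ₖ proj (v i)) (Q0 U V) with he
  have hpure : ∀ i, Real.sqrt ((x i)^2 + (y i)^2) ≤ e i := fun i =>
    pure_case (u i) (v i) (hu i) (hv i) U hU V hV
  have habs : ∀ i, ‖(x i : ℂ) + (y i : ℂ) * Complex.I‖ =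
      Real.sqrt ((x i)^2 + (y i)^2) := by
    intro i
    rw [Complex.norm_def, Complex.normSq_apply]
    simp [sq]
  calc Real.sqrt ((∑ i, p i * x i)^2 + (∑ i, p i * y i)^2)
      = ‖(↑(∑ i, p i * x i) : ℂ) + (↑(∑ i, p i * y i) : ℂ) * Complex.I‖ := by
        rw [Complex.norm_def, Complex.normSq_apply]
        simp [sq]
    _ = ‖∑ i, ((p i : ℂ) * ((x i : ℂ) + (y i : ℂ) * Complex.I))‖ := by
        congr 1
        push_cast
        rw [Finset.sum_mul, ← Finset.sum_add_distrib]
        exact Finset.sum_congr rfl fun i _ => by ring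
    _ ≤ ∑ i, ‖(p i : ℂ) * ((x i : ℂ) + (y i : ℂ) * Complex.I)‖ :=
        norm_sum_le _ _
    _ = ∑ i, p i * Real.sqrt ((x i)^2 + (y i)^2) := by
        refine Finset.sum_congr rfl fun i _ => ?_
        rw [norm_mul, habs i, Complex.norm_of_nonneg (hp0 i)]
    _ ≤ ∑ i, p i * e i := by
        refine Finset.sum_le_sum fun i _ => ?_
        exact mul_le_mul_of_nonneg_left (hpure i) (hp0 i)
end
end

section
/- If a two-qubit density matrix $\rho$ satisfies $\langle I_2\otimes I_2 + A_3\otimes B_3\rangle_\rho \geq \big(\langle I_2\otimes B_3 + A_3\otimes I_2\rangle_\rho^2 + \langle A_1\otimes B_1 + A_2\otimes B_2\rangle_\rho^2\big)^{1/2}$ for all observables $A_i = U\sigma_i U^\dagger$, $B_j = V\sigma_j V^\dagger$ with $U,V$ ranging over all $2\times 2$ unitaries, then the partial transpose $\rho^{T_1}$ is positive semidefinite. -/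
open Matrix Kronecker
open scoped ComplexOrder

noncomputable section

/-! ### Auxiliary lemmas -/

lemma aux_sig3_decomp (T : M2) :
    T * sig3 * Tᴴ = Matrix.vecMulVec (fun i => T i 0) (star (fun j => T j 0))
      - Matrix.vecMulVec (fun i => T i 1) (star (fun j => T j 1)) := by
  ext i j
  simp [Matrix.mul_apply, Fin.sum_univ_two, sig3, Matrix.single, Matrix.vecMulVec_apply,
    Matrix.conjTranspose_apply, Pi.star_apply]
  ring

lemma aux_sig1_decomp (T : M2) :
    T * sig1 * Tᴴ = Matrix.vecMulVec (fun i => T i 0) (star (fun j => T j 1))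
      + Matrix.vecMulVec (fun i => T i 1) (star (fun j => T j 0)) := by
  ext i j
  simp [Matrix.mul_apply, Fin.sum_univ_two, sig1, Matrix.single, Matrix.vecMulVec_apply,
    Matrix.conjTranspose_apply, Pi.star_apply]
  ring

lemma aux_sig2_decomp (T : M2) :
    T * sig2 * Tᴴ = Complex.I • (Matrix.vecMulVec (fun i => T i 0) (star (fun j => T j 1))
      - Matrix.vecMulVec (fun i => T i 1) (star (fun j => T j 0))) := by
  ext i j
  simp [Matrix.mul_apply, Fin.sum_univ_two, sig2, Matrix.single, Matrix.vecMulVec_apply,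
    Matrix.conjTranspose_apply, Pi.star_apply, Matrix.smul_apply, Matrix.sub_apply]
  ring

lemma aux_one_decomp (T : M2) (hT : T * Tᴴ = 1) :
    Matrix.vecMulVec (fun i => T i 0) (star (fun j => T j 0))
      + Matrix.vecMulVec (fun i => T i 1) (star (fun j => T j 1)) = 1 := by
  rw [← hT]
  ext i j
  simp [Matrix.mul_apply, Fin.sum_univ_two, Matrix.vecMulVec_apply,
    Matrix.conjTranspose_apply, Pi.star_apply]

lemma aux_key (G V : M2) (hG : G * Gᴴ = 1) (hV : V * Vᴴ = 1) (a b : ℝ)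
    (ψ : Fin 2 × Fin 2 → ℂ)
    (hψ : ∀ p : Fin 2 × Fin 2, ψ p = a * (starRingEnd ℂ) (G p.1 0) * V p.2 0
        + b * (starRingEnd ℂ) (G p.1 1) * V p.2 1) :
    PT (proj ψ) = (((a^2+b^2)/4 : ℝ) : ℂ) • Q0 G V + (((a^2-b^2)/4 : ℝ) : ℂ) • Q1 G V
      + ((a*b/2 : ℝ) : ℂ) • Q2 G V := by
  set PG := Matrix.vecMulVec (fun i => G i 0) (star (fun j => G j 0)) with hPG
  set PG' := Matrix.vecMulVec (fun i => G i 1) (star (fun j => G j 1)) with hPG'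
  set QV := Matrix.vecMulVec (fun i => V i 0) (star (fun j => V j 0)) with hQV
  set QV' := Matrix.vecMulVec (fun i => V i 1) (star (fun j => V j 1)) with hQV'
  set XG := Matrix.vecMulVec (fun i => G i 0) (star (fun j => G j 1)) with hXG
  set XG' := Matrix.vecMulVec (fun i => G i 1) (star (fun j => G j 0)) with hXG'
  set YV := Matrix.vecMulVec (fun i => V i 0) (star (fun j => V j 1)) with hYV
  set YV' := Matrix.vecMulVec (fun i => V i 1) (star (fun j => V j 0)) with hYV'
  have e0 : Q0 G V = (PG + PG') ⊗ₖ (QV + QV') + (PG - PG') ⊗ₖ (QV - QV') := by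
    rw [Q0, show QA G 2 = G * sig3 * Gᴴ from rfl, show QA V 2 = V * sig3 * Vᴴ from rfl,
      aux_sig3_decomp, aux_sig3_decomp, aux_one_decomp G hG, aux_one_decomp V hV]
  have e1 : Q1 G V = (PG + PG') ⊗ₖ (QV - QV') + (PG - PG') ⊗ₖ (QV + QV') := by
    rw [Q1, show QA G 2 = G * sig3 * Gᴴ from rfl, show QA V 2 = V * sig3 * Vᴴ from rfl,
      aux_sig3_decomp, aux_sig3_decomp, aux_one_decomp G hG, aux_one_decomp V hV]
  have e2 : Q2 G V = (XG + XG') ⊗ₖ (YV + YV') + (-1 : ℂ) • ((XG - XG') ⊗ₖ (YV - YV')) := by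
    rw [Q2, show QA G 0 = G * sig1 * Gᴴ from rfl, show QA V 0 = V * sig1 * Vᴴ from rfl,
      show QA G 1 = G * sig2 * Gᴴ from rfl, show QA V 1 = V * sig2 * Vᴴ from rfl,
      aux_sig1_decomp, aux_sig1_decomp, aux_sig2_decomp, aux_sig2_decomp,
      Matrix.smul_kronecker, Matrix.kronecker_smul, smul_smul, Complex.I_mul_I]
  rw [e0, e1, e2]
  ext ⟨i, j⟩ ⟨k, l⟩
  simp only [PT, proj, Matrix.vecMulVec_apply, Pi.star_apply, hψ,
    Matrix.add_apply, Matrix.sub_apply, Matrix.smul_apply, Matrix.kroneckerMap_apply,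
    hPG, hPG', hQV, hQV', hXG, hXG', hYV, hYV', smul_eq_mul]
  simp only [Complex.star_def, map_add, _root_.map_mul, Complex.conj_ofReal, Complex.conj_conj]
  push_cast
  ring

lemma aux_PT_isHermitian {ρ : M4} (h : ρ.IsHermitian) : (PT ρ).IsHermitian := by
  ext ⟨i, j⟩ ⟨k, l⟩
  have := congrFun (congrFun h (k, j)) (i, l)
  simp only [Matrix.conjTranspose_apply, PT] at this ⊢
  exact this

lemma aux_quad_real {n : Type} [Fintype n] {ρ : Matrix n n ℂ} (h : ρ.IsHermitian) (x : n → ℂ) :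
    (star (dotProduct (star x) (ρ *ᵥ x)) : ℂ) = dotProduct (star x) (ρ *ᵥ x) := by
  conv_lhs => rw [Matrix.star_dotProduct, star_star, Matrix.star_mulVec, h.eq,
    ← dotProduct_mulVec]

lemma aux_trace_transfer (ρ : M4) (ψ : Fin 2 × Fin 2 → ℂ) :
    dotProduct (star ψ) ((PT ρ) *ᵥ ψ) = (ρ * PT (proj ψ)).trace := by
  simp only [dotProduct, Matrix.mulVec, Matrix.trace, Matrix.diag, Matrix.mul_apply,
    PT, proj, Matrix.vecMulVec_apply, Pi.star_apply, Fintype.sum_prod_type, Fin.sum_univ_two]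
  ring

lemma aux_unitary_of_cols (u v : Fin 2 → ℂ)
    (hu : (starRingEnd ℂ) (u 0) * u 0 + (starRingEnd ℂ) (u 1) * u 1 = 1)
    (hv : (starRingEnd ℂ) (v 0) * v 0 + (starRingEnd ℂ) (v 1) * v 1 = 1)
    (huv : (starRingEnd ℂ) (u 0) * v 0 + (starRingEnd ℂ) (u 1) * v 1 = 0) :
    Matrix.of ![![u 0, v 0], ![u 1, v 1]] ∈ Matrix.unitaryGroup (Fin 2) ℂ := by
  have huv' : (starRingEnd ℂ) (v 0) * u 0 + (starRingEnd ℂ) (v 1) * u 1 = 0 := by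
    have := congrArg (starRingEnd ℂ) huv
    simpa [mul_comm] using this
  rw [Matrix.mem_unitaryGroup_iff']
  ext i j
  fin_cases i <;> fin_cases j <;>
    simp only [Matrix.mul_apply, Fin.sum_univ_two, Matrix.star_apply, Matrix.one_apply,
      Complex.star_def, Matrix.of_apply, Matrix.cons_val', Matrix.cons_val_zero,
      Matrix.cons_val_one, Matrix.head_cons, Matrix.head_fin_const, Matrix.empty_val',
      Matrix.cons_val_fin_one, if_true, if_false] <;>
    first
    | (exact hu.trans (by norm_num))
    | (exact hv.trans (by norm_num))
    | (exact huv.trans (by norm_num))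
    | (exact huv'.trans (by norm_num))

/-- normalized vector condition -/
lemma aux_norm_cond (p : Fin 2 → ℂ) (hp : p ≠ 0) :
    ∃ a : ℝ, 0 < a ∧ (starRingEnd ℂ) (p 0 / a) * (p 0 / a)
      + (starRingEnd ℂ) (p 1 / a) * (p 1 / a) = 1 := by
  have hpos : 0 < Complex.normSq (p 0) + Complex.normSq (p 1) := by
    have hone : p 0 ≠ 0 ∨ p 1 ≠ 0 := by
      by_contra hc
      push_neg at hc
      exact hp (funext fun i => by fin_cases i <;> simp [hc.1, hc.2])
    rcases hone with h0 | h1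
    · have := Complex.normSq_pos.2 h0
      have := Complex.normSq_nonneg (p 1); linarith
    · have := Complex.normSq_pos.2 h1
      have := Complex.normSq_nonneg (p 0); linarith
  refine ⟨Real.sqrt (Complex.normSq (p 0) + Complex.normSq (p 1)), Real.sqrt_pos.2 hpos, ?_⟩
  set a := Real.sqrt (Complex.normSq (p 0) + Complex.normSq (p 1)) with ha
  have ha0 : (a : ℂ) ≠ 0 := by
    simp only [ne_eq, Complex.ofReal_eq_zero]
    exact ne_of_gt (Real.sqrt_pos.2 hpos)
  have h2 : a ^ 2 = Complex.normSq (p 0) + Complex.normSq (p 1) := by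
    rw [ha]; exact Real.sq_sqrt hpos.le
  have ha2 : (a : ℂ) ^ 2 = (Complex.normSq (p 0) : ℂ) + (Complex.normSq (p 1) : ℂ) := by
    rw [← Complex.ofReal_pow, h2]; push_cast; ring
  field_simp
  rw [map_div₀, map_div₀, Complex.conj_ofReal]
  field_simp
  rw [mul_comm (p 0), mul_comm (p 1), ← Complex.normSq_eq_conj_mul_self,
    ← Complex.normSq_eq_conj_mul_self, ← ha2]

lemma aux_cols_to_unitary (p q : Fin 2 → ℂ)
    (hpq : (starRingEnd ℂ) (p 0) * q 0 + (starRingEnd ℂ) (p 1) * q 1 = 0) :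
    ∃ U ∈ Matrix.unitaryGroup (Fin 2) ℂ, ∃ a b : ℝ, 0 ≤ a ∧ 0 ≤ b ∧
      (∀ i, p i = a * U i 0) ∧ (∀ i, q i = b * U i 1) := by
  by_cases hp : p = 0
  · by_cases hq : q = 0
    · exact ⟨1, Submonoid.one_mem _, 0, 0, le_refl _, le_refl _,
        fun i => by simp [congrFun hp i], fun i => by simp [congrFun hq i]⟩
    · obtain ⟨b, hb, hbn⟩ := aux_norm_cond q hq
      set v : Fin 2 → ℂ := fun i => q i / b with hv
      set u : Fin 2 → ℂ := ![-(starRingEnd ℂ) (v 1), (starRingEnd ℂ) (v 0)] with hu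
      have hUmem := aux_unitary_of_cols u v
        (by simp only [hu]; simp only [Matrix.cons_val_zero, Matrix.cons_val_one, Matrix.head_cons,
              map_neg, Complex.conj_conj]; linear_combination hbn)
        hbn
        (by simp only [hu]; simp only [Matrix.cons_val_zero, Matrix.cons_val_one, Matrix.head_cons,
              map_neg, Complex.conj_conj]; ring)
      refine ⟨_, hUmem, 0, b, le_refl _, hb.le, fun i => by
          fin_cases i <;> simp [congrFun hp 0, congrFun hp 1], fun i => ?_⟩
      have hb0 : (b : ℂ) ≠ 0 := by simpa using hb.ne'
      fin_cases i <;> simp [hv] <;> field_simp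
  · obtain ⟨a, ha, han⟩ := aux_norm_cond p hp
    have ha0 : (a : ℂ) ≠ 0 := by simpa using ha.ne'
    set u : Fin 2 → ℂ := fun i => p i / a with hu
    by_cases hq : q = 0
    · set v : Fin 2 → ℂ := ![-(starRingEnd ℂ) (u 1), (starRingEnd ℂ) (u 0)] with hv
      have hUmem := aux_unitary_of_cols u v han
        (by simp only [hv]; simp only [Matrix.cons_val_zero, Matrix.cons_val_one, Matrix.head_cons,
              map_neg, Complex.conj_conj]; linear_combination han)
        (by simp only [hv]; simp only [Matrix.cons_val_zero, Matrix.cons_val_one, Matrix.head_cons,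
              map_neg, Complex.conj_conj]; ring)
      refine ⟨_, hUmem, a, 0, ha.le, le_refl _, fun i => ?_, fun i => by
          fin_cases i <;> simp [congrFun hq 0, congrFun hq 1]⟩
      fin_cases i <;> simp [hu] <;> field_simp
    · obtain ⟨b, hb, hbn⟩ := aux_norm_cond q hq
      have hb0 : (b : ℂ) ≠ 0 := by simpa using hb.ne'
      set v : Fin 2 → ℂ := fun i => q i / b with hv
      have huv : (starRingEnd ℂ) (u 0) * v 0 + (starRingEnd ℂ) (u 1) * v 1 = 0 := by
        simp only [hu, hv, map_div₀, Complex.conj_ofReal]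
        field_simp
        linear_combination hpq
      have hUmem := aux_unitary_of_cols u v han hbn huv
      refine ⟨_, hUmem, a, b, ha.le, hb.le, fun i => ?_, fun i => ?_⟩ <;>
        fin_cases i <;> simp [hu, hv] <;> field_simp

lemma aux_conj_mem_unitary {U : M2} (hU : U ∈ Matrix.unitaryGroup (Fin 2) ℂ) :
    U.map (starRingEnd ℂ) ∈ Matrix.unitaryGroup (Fin 2) ℂ := by
  rw [Matrix.mem_unitaryGroup_iff] at hU ⊢
  ext i j
  have := congrArg (starRingEnd ℂ) (congrFun (congrFun hU i) j)
  simp only [Matrix.mul_apply, Fin.sum_univ_two, Matrix.star_apply, Matrix.map_apply,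
    Matrix.one_apply, Complex.star_def, map_add, _root_.map_mul, Complex.conj_conj,
    apply_ite, _root_.map_one, _root_.map_zero] at this ⊢
  exact this

theorem stmt_12 (ρ : M4) (hpsd : ρ.PosSemidef) (htr : ρ.trace = 1)
    (h : ∀ (U V : M2), U ∈ Matrix.unitaryGroup (Fin 2) ℂ →
        V ∈ Matrix.unitaryGroup (Fin 2) ℂ →
        Real.sqrt ((expval ρ (Q1 U V))^2 + (expval ρ (Q2 U V))^2)
          ≤ expval ρ (Q0 U V)) :
    (PT ρ).PosSemidef := by
  refine Matrix.PosSemidef.of_dotProduct_mulVec_nonneg (aux_PT_isHermitian hpsd.1) fun ψ => ?_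
  -- Schmidt decomposition of ψ
  set M : M2 := Matrix.of (fun i j => ψ (i, j)) with hMdef
  have hH : (Mᴴ * M).IsHermitian := (Matrix.posSemidef_conjTranspose_mul_self M).1
  set W : M2 := (hH.eigenvectorUnitary : M2) with hWdef
  have hWmem : W ∈ Matrix.unitaryGroup (Fin 2) ℂ := hH.eigenvectorUnitary.2
  have hWW : star W * W = 1 := Matrix.mem_unitaryGroup_iff'.mp hWmem
  have hWW' : W * star W = 1 := Matrix.mem_unitaryGroup_iff.mp hWmem
  set p : Fin 2 → ℂ := fun i => (M * W) i 0 with hpdef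
  set q : Fin 2 → ℂ := fun i => (M * W) i 1 with hqdef
  have hdiag : star W * (Mᴴ * M) * W
      = Matrix.diagonal (RCLike.ofReal ∘ hH.eigenvalues) := by
    conv_lhs => rw [hH.spectral_theorem, Unitary.conjStarAlgAut_apply]
    simp only [Unitary.coe_star, ← hWdef, ← Matrix.mul_assoc]
    rw [hWW, Matrix.one_mul, Matrix.mul_assoc, hWW, Matrix.mul_one]
  have horth : (starRingEnd ℂ) (p 0) * q 0 + (starRingEnd ℂ) (p 1) * q 1 = 0 := by
    have h01 : (star W * (Mᴴ * M) * W) 0 1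
        = (starRingEnd ℂ) (p 0) * q 0 + (starRingEnd ℂ) (p 1) * q 1 := by
      simp only [hpdef, hqdef, Matrix.mul_apply, Fin.sum_univ_two, Matrix.star_apply,
        Matrix.conjTranspose_apply, Complex.star_def, map_add, _root_.map_mul]
      ring
    rw [hdiag] at h01
    rw [← h01]
    simp [Matrix.diagonal]
  obtain ⟨U, hUmem, a, b, ha, hb, hpU, hqU⟩ := aux_cols_to_unitary p q horth
  set G : M2 := U.map (starRingEnd ℂ) with hGdef
  set V : M2 := W.map (starRingEnd ℂ) with hVdef
  have hGmem : G ∈ Matrix.unitaryGroup (Fin 2) ℂ := aux_conj_mem_unitary hUmem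
  have hVmem : V ∈ Matrix.unitaryGroup (Fin 2) ℂ := aux_conj_mem_unitary hWmem
  have hG : G * Gᴴ = 1 := by
    rw [← Matrix.star_eq_conjTranspose]; exact Matrix.mem_unitaryGroup_iff.mp hGmem
  have hV : V * Vᴴ = 1 := by
    rw [← Matrix.star_eq_conjTranspose]; exact Matrix.mem_unitaryGroup_iff.mp hVmem
  have hψ : ∀ pr : Fin 2 × Fin 2, ψ pr = a * (starRingEnd ℂ) (G pr.1 0) * V pr.2 0
      + b * (starRingEnd ℂ) (G pr.1 1) * V pr.2 1 := by
    rintro ⟨i, j⟩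
    have hM1 : M = (M * W) * star W := by rw [Matrix.mul_assoc, hWW', Matrix.mul_one]
    have h1 : ψ (i, j) = p i * (starRingEnd ℂ) (W j 0) + q i * (starRingEnd ℂ) (W j 1) := by
      conv_lhs => rw [show ψ (i, j) = M i j from rfl, hM1]
      rw [Matrix.mul_apply]
      simp only [Fin.sum_univ_two, Matrix.star_apply, Complex.star_def, hpdef, hqdef]
    rw [h1, hpU i, hqU i]
    simp only [hGdef, hVdef, Matrix.map_apply, Complex.conj_conj]
  have hk := aux_key G V hG hV a b ψ hψ
  have hz := aux_trace_transfer ρ ψ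
  set E0 := expval ρ (Q0 G V) with hE0def
  set E1 := expval ρ (Q1 G V) with hE1def
  set E2 := expval ρ (Q2 G V) with hE2def
  have hre : (dotProduct (star ψ) ((PT ρ) *ᵥ ψ)).re
      = ((a^2+b^2)/4) * E0 + ((a^2-b^2)/4) * E1 + (a*b/2) * E2 := by
    rw [hz, hk, Matrix.mul_add, Matrix.mul_add, Matrix.mul_smul, Matrix.mul_smul,
      Matrix.mul_smul, Matrix.trace_add, Matrix.trace_add, Matrix.trace_smul,
      Matrix.trace_smul, Matrix.trace_smul]
    simp only [hE0def, hE1def, hE2def, expval, smul_eq_mul, Complex.add_re, Complex.mul_re,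
      Complex.ofReal_re, Complex.ofReal_im]
    ring
  have him : (dotProduct (star ψ) ((PT ρ) *ᵥ ψ)).im = 0 := by
    have := aux_quad_real (aux_PT_isHermitian hpsd.1) ψ
    rw [Complex.star_def] at this
    exact (Complex.conj_eq_iff_im.mp this)
  have hEineq := h G V hGmem hVmem
  rw [← hE0def, ← hE1def, ← hE2def] at hEineq
  have hE0 : 0 ≤ E0 := le_trans (Real.sqrt_nonneg _) hEineq
  have hsq : E1^2 + E2^2 ≤ E0^2 := by
    nlinarith [Real.sq_sqrt (show (0:ℝ) ≤ E1^2+E2^2 by positivity),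
      Real.sqrt_nonneg (E1^2+E2^2)]
  have hs : (0:ℝ) ≤ a^2 + b^2 := by positivity
  have h1' : (a^2+b^2)^2 * (E1^2+E2^2) ≤ (a^2+b^2)^2 * E0^2 :=
    mul_le_mul_of_nonneg_left hsq (by positivity)
  have h2' : ((a^2-b^2)*E1 + 2*a*b*E2)^2 ≤ (a^2+b^2)^2*(E1^2+E2^2) := by
    nlinarith [sq_nonneg ((a^2-b^2)*E2 - 2*a*b*E1)]
  have hfin : 0 ≤ ((a^2+b^2)/4) * E0 + ((a^2-b^2)/4) * E1 + (a*b/2) * E2 := by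
    nlinarith [h1', h2', mul_nonneg hs hE0,
      sq_nonneg ((a^2+b^2)*E0 + ((a^2-b^2)*E1 + 2*a*b*E2))]
  rw [Complex.le_def]
  constructor
  · rw [Complex.zero_re, hre]; exact hfin
  · rw [Complex.zero_im, him]
end
end

section
/- Let $\rho_p = p|\psi^+\rangle\langle\psi^+| + \frac{1-p}{6}I_6$ on $\mathbb{C}^2\otimes\mathbb{C}^3$ with $|\psi^+\rangle = \frac{1}{\sqrt2}(|00\rangle+|11\rangle)$ and $0\le p\le 1$. Taking $U = I_2$ and $V = |0\rangle\langle1| + |1\rangle\langle0| + |2\rangle\langle2|$, so $A_i = \sigma_i$ and $B_j = V\lambda_jV^\dagger$, the violation value $F_{U,V}^{(3)}(\rho_p) := \big(\langle 3I_2\otimes B_1 + 2A_3\otimes I_3 - A_3\otimes B_1 + 2A_3\otimes B_2\rangle_{\rho_p}^2 + 9\langle A_1\otimes B_3 + A_2\otimes B_4\rangle_{\rho_p}^2\big)^{1/2} - \langle 2I_2\otimes I_3 - I_2\otimes B_1 + 2I_2\otimes B_2 + 3A_3\otimes B_1\rangle_{\rho_p}$ equals $8p-2$; in particular it is positive if and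 only if $p > 1/4$. -/
open Matrix Kronecker
open scoped ComplexOrder

noncomputable section

/-- |ψ⁺⟩ = (|00⟩+|11⟩)/√2 in C²⊗C³ -/
def psiPlus : Fin 2 × Fin 3 → ℂ :=
  fun p => if p = (0,0) then (1/Real.sqrt 2 : ℝ) else if p = (1,1) then (1/Real.sqrt 2 : ℝ) else 0

/-- ρ_p = p|ψ⁺⟩⟨ψ⁺| + (1-p)/6 I₆ -/
def rhoIso (p : ℝ) : M6 := ((p : ℝ) : ℂ) • proj psiPlus + (((1 - p)/6 : ℝ) : ℂ) • (1 : M6)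

/-- V = |0⟩⟨1| + |1⟩⟨0| + |2⟩⟨2| -/
def Vswap : M3 :=
  Matrix.single 0 1 1 + Matrix.single 1 0 1 + Matrix.single 2 2 1

lemma hOA (i : Fin 3) : OA 1 i = ![sig1, sig2, sig3] i := by
  simp [OA]

lemma hB0 : OB Vswap 0 = !![-1,0,0;0,1,0;0,0,0] := by
  ext i j
  fin_cases i <;> fin_cases j <;>
    simp [OB, Vswap, lam1, Matrix.mul_apply, Fin.sum_univ_succ, Matrix.single,
      Matrix.conjTranspose_apply, Matrix.of_apply, Matrix.vecHead, Matrix.vecTail]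

lemma hB1 : OB Vswap 1 = !![0,0,0;0,1,0;0,0,-1] := by
  ext i j
  fin_cases i <;> fin_cases j <;>
    simp [OB, Vswap, lam2, Matrix.mul_apply, Fin.sum_univ_succ, Matrix.single,
      Matrix.conjTranspose_apply, Matrix.of_apply, Matrix.vecHead, Matrix.vecTail]

lemma hB2 : OB Vswap 2 = !![0,1,0;1,0,0;0,0,0] := by
  ext i j
  fin_cases i <;> fin_cases j <;>
    simp [OB, Vswap, lam3, Matrix.mul_apply, Fin.sum_univ_succ, Matrix.single,
      Matrix.conjTranspose_apply, Matrix.of_apply, Matrix.vecHead, Matrix.vecTail]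

lemma hB3 : OB Vswap 3 = !![0,-Complex.I,0;Complex.I,0,0;0,0,0] := by
  ext i j
  fin_cases i <;> fin_cases j <;>
    simp [OB, Vswap, lam4, Matrix.mul_apply, Fin.sum_univ_succ, Matrix.single,
      Matrix.conjTranspose_apply, Matrix.of_apply, Matrix.vecHead, Matrix.vecTail]
lemma sqrt2_inv : ((Real.sqrt 2 : ℝ) : ℂ)⁻¹ * ((Real.sqrt 2 : ℝ) : ℂ)⁻¹ = 1/2 := by
  rw [← mul_inv, ← Complex.ofReal_mul, Real.mul_self_sqrt (by norm_num)]
  norm_num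

lemma htr (p : ℝ) (M : M6) : (rhoIso p * M).trace =
    (p : ℂ) * ((M (0,0) (0,0) + M (0,0) (1,1) + M (1,1) (0,0) + M (1,1) (1,1))/2)
    + (((1-p)/6 : ℝ) : ℂ) * M.trace := by
  have hproj : (proj psiPlus * M).trace =
      (M (0,0) (0,0) + M (0,0) (1,1) + M (1,1) (0,0) + M (1,1) (1,1))/2 := by
    simp only [Matrix.trace, Matrix.diag, Matrix.mul_apply, proj, Matrix.vecMulVec_apply,
      Fintype.sum_prod_type, Fin.sum_univ_succ, Fin.sum_univ_zero]
    norm_num [psiPlus, Prod.ext_iff, Fin.ext_iff]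
    ring_nf
    rw [show ((Real.sqrt 2 : ℝ) : ℂ)⁻¹ ^ 2 = 1/2 by rw [sq, sqrt2_inv]]
    ring
  rw [rhoIso, Matrix.add_mul, Matrix.smul_mul, Matrix.smul_mul, Matrix.trace_add,
    Matrix.trace_smul, Matrix.trace_smul, Matrix.one_mul, hproj]
  simp [smul_eq_mul]
lemma t1 (p : ℝ) : (rhoIso p * Obs1 1 Vswap).trace = 0 := by
  rw [htr]
  norm_num [Obs1, hOA, hB0, hB1, sig3, Matrix.trace, Matrix.diag, Fintype.sum_prod_type,
    Fin.sum_univ_succ, Matrix.kroneckerMap_apply, Matrix.single, Matrix.one_apply,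
    Matrix.add_apply, Matrix.sub_apply, Matrix.smul_apply, Matrix.of_apply, Matrix.cons_val_zero,
    Matrix.cons_val_one, Matrix.head_cons, Matrix.vecHead, Matrix.vecTail, Prod.ext_iff,
    Fin.ext_iff, Matrix.cons_val_two, Pi.sub_apply]

lemma t2 (p : ℝ) : (rhoIso p * Obs2 1 Vswap).trace = ((2*p : ℝ) : ℂ) := by
  rw [htr]
  norm_num [Obs2, hOA, hB2, hB3, sig1, sig2, Matrix.trace, Matrix.diag, Fintype.sum_prod_type,
    Fin.sum_univ_succ, Matrix.kroneckerMap_apply, Matrix.single, Matrix.one_apply,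
    Matrix.add_apply, Matrix.sub_apply, Matrix.smul_apply, Matrix.of_apply, Matrix.cons_val_zero,
    Matrix.cons_val_one, Matrix.head_cons, Matrix.vecHead, Matrix.vecTail, Prod.ext_iff,
    Fin.ext_iff, Complex.ext_iff]
  ring

lemma t0 (p : ℝ) : (rhoIso p * Obs0 1 Vswap).trace = ((2 - 2*p : ℝ) : ℂ) := by
  rw [htr]
  norm_num [Obs0, hOA, hB0, hB1, sig3, Matrix.trace, Matrix.diag, Fintype.sum_prod_type,
    Fin.sum_univ_succ, Matrix.kroneckerMap_apply, Matrix.single, Matrix.one_apply,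
    Matrix.add_apply, Matrix.sub_apply, Matrix.smul_apply, Matrix.of_apply, Matrix.cons_val_zero,
    Matrix.cons_val_one, Matrix.head_cons, Matrix.vecHead, Matrix.vecTail, Prod.ext_iff,
    Fin.ext_iff, Complex.ext_iff, Matrix.cons_val_two, Pi.sub_apply]
  ring
theorem stmt_13 (p : ℝ) (hp0 : 0 ≤ p) (hp1 : p ≤ 1) (F : ℝ)
    (hF : F = Real.sqrt ((expval (rhoIso p) (Obs1 1 Vswap))^2
        + 9 * (expval (rhoIso p) (Obs2 1 Vswap))^2)
      - expval (rhoIso p) (Obs0 1 Vswap)) :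
    F = 8 * p - 2 ∧ (0 < F ↔ 1/4 < p) := by
  have e1 : expval (rhoIso p) (Obs1 1 Vswap) = 0 := by rw [expval, t1]; simp
  have e2 : expval (rhoIso p) (Obs2 1 Vswap) = 2*p := by rw [expval, t2, Complex.ofReal_re]
  have e0 : expval (rhoIso p) (Obs0 1 Vswap) = 2 - 2*p := by rw [expval, t0, Complex.ofReal_re]
  have hs : Real.sqrt ((0:ℝ)^2 + 9*(2*p)^2) = 6*p := by
    rw [show (0:ℝ)^2 + 9*(2*p)^2 = (6*p)^2 by ring]
    exact Real.sqrt_sq (by positivity)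
  have hF' : F = 8*p - 2 := by rw [hF, e1, e2, e0, hs]; ring
  exact ⟨hF', by rw [hF']; constructor <;> intro <;> linarith⟩
end
end

section
/- For the pure state $|\chi\rangle = \alpha_0|01\rangle + \beta_0|10\rangle \in \mathbb{C}^2\otimes\mathbb{C}^3$ with $\alpha_0,\beta_0 \geq 0$, $\alpha_0^2+\beta_0^2=1$, and with the choice $U=I_2$, $V=I_3$ (so $A_i=\sigma_i$, $B_j=\lambda_j$), the violation value $F_{I_2,I_3}^{(3)}(|\chi\rangle\langle\chi|) = \big(\langle 3I_2\otimes\lambda_1 + 2\sigma_3\otimes I_3 - \sigma_3\otimes\lambda_1 + 2\sigma_3\otimes\lambda_2\rangle^2 + 9\langle\sigma_1\otimes\lambda_3 + \sigma_2\otimes\lambda_4\rangle^2\big)^{1/2} - \langle 2I_2\otimes I_3 - I_2\otimes\lambda_1 + 2I_2\otimes\lambda_2 + 3\sigma_3\otimes\lambda_1\rangle$ (all expectations in the state $|\chi\rangle\langle\chi|$) equals $12\alpha_0\beta_0$. -/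
open Matrix Kronecker
open scoped ComplexOrder

noncomputable section

set_option maxHeartbeats 1000000 in
theorem stmt_15 (α0 β0 : ℝ) (hα : 0 ≤ α0) (hβ : 0 ≤ β0) (hnorm : α0^2 + β0^2 = 1)
    (χ : Fin 2 × Fin 3 → ℂ)
    (hχ : χ = fun p => if p = (0,1) then (α0 : ℂ) else if p = (1,0) then (β0 : ℂ) else 0) :
    Real.sqrt ((expval (proj χ) (Obs1 1 1))^2 + 9 * (expval (proj χ) (Obs2 1 1))^2)
      - expval (proj χ) (Obs0 1 1) = 12 * α0 * β0 := by
  subst hχ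
  have e1 : expval (proj (fun p : Fin 2 × Fin 3 =>
      if p = (0,1) then (α0 : ℂ) else if p = (1,0) then (β0 : ℂ) else 0)) (Obs1 1 1) = 0 := by
    simp only [expval, Matrix.trace, Matrix.diag, Matrix.mul_apply, proj, Matrix.vecMulVec_apply,
      Obs1, OA, OB, Matrix.conjTranspose_one, Matrix.one_mul, Matrix.mul_one,
      sig1, sig2, sig3, lam1, lam2, lam3, lam4, Matrix.kroneckerMap_apply,
      Fintype.sum_prod_type, Fin.sum_univ_succ, Fin.sum_univ_zero,
      Matrix.add_apply, Matrix.sub_apply, Matrix.smul_apply, Matrix.one_apply,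
      Matrix.single_apply, Matrix.of_apply, Pi.star_apply, Matrix.cons_val]
    norm_num [Complex.ext_iff, Prod.mk.injEq, Fin.ext_iff]
  have e2 : expval (proj (fun p : Fin 2 × Fin 3 =>
      if p = (0,1) then (α0 : ℂ) else if p = (1,0) then (β0 : ℂ) else 0)) (Obs2 1 1) = 4 * α0 * β0 := by
    simp only [expval, Matrix.trace, Matrix.diag, Matrix.mul_apply, proj, Matrix.vecMulVec_apply,
      Obs2, OA, OB, Matrix.conjTranspose_one, Matrix.one_mul, Matrix.mul_one,
      sig1, sig2, sig3, lam1, lam2, lam3, lam4, Matrix.kroneckerMap_apply,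
      Fintype.sum_prod_type, Fin.sum_univ_succ, Fin.sum_univ_zero,
      Matrix.add_apply, Matrix.sub_apply, Matrix.smul_apply, Matrix.one_apply,
      Matrix.single_apply, Matrix.of_apply, Pi.star_apply, Matrix.cons_val]
    norm_num [Complex.ext_iff, Prod.mk.injEq, Fin.ext_iff]
    ring
  have e0 : expval (proj (fun p : Fin 2 × Fin 3 =>
      if p = (0,1) then (α0 : ℂ) else if p = (1,0) then (β0 : ℂ) else 0)) (Obs0 1 1) = 0 := by
    simp only [expval, Matrix.trace, Matrix.diag, Matrix.mul_apply, proj, Matrix.vecMulVec_apply,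
      Obs0, OA, OB, Matrix.conjTranspose_one, Matrix.one_mul, Matrix.mul_one,
      sig1, sig2, sig3, lam1, lam2, lam3, lam4, Matrix.kroneckerMap_apply,
      Fintype.sum_prod_type, Fin.sum_univ_succ, Fin.sum_univ_zero,
      Matrix.add_apply, Matrix.sub_apply, Matrix.smul_apply, Matrix.one_apply,
      Matrix.single_apply, Matrix.of_apply, Pi.star_apply, Matrix.cons_val]
    norm_num [Complex.ext_iff, Prod.mk.injEq, Fin.ext_iff]
  rw [e1, e2, e0]
  have h12 : (0:ℝ) ≤ 12 * α0 * β0 := by positivity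
  have : (0:ℝ)^2 + 9 * (4 * α0 * β0)^2 = (12 * α0 * β0)^2 := by ring
  rw [this, Real.sqrt_sq h12]
  ring
end
end
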